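/- Let P be a probability measure on a product space X × Y with X-marginal μ, let g : X → ℝ be measurable with atomless pushforward μ∘g⁻¹, and let h : X × Y → ℝ be a nonnegative integrable function (the pointwise loss ℓ(f(x), y)). Define G(x) := μ{x' : g(x') ≤ g(x)}. Then the population AURC, defined as ∫_X ( ∫_{X×Y} h(x,y)·𝟙[g(x) ≥ g(x̃)] dP(x,y) ) / μ{x' : g(x') ≥ g(x̃)} dμ(x̃), equals ∫_{X×Y} (−log(1 − G(x))) · h(x,y) dP(x,y). -/

import Mathlib

open MeasureTheory

open Set

open scoped ENNReal

lemma measure_Iic_eq_Iio (ν : Measure ℝ) [NullSingletonClass ν] (t : ℝ) :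
    ν (Iic t) = ν (Iio t) := (measure_congr (Iio_ae_eq_Iic (a := t))).symm

lemma measure_Ici_eq_Ioi (ν : Measure ℝ) [NullSingletonClass ν] (t : ℝ) :
    ν (Ici t) = ν (Ioi t) := (measure_congr (Ioi_ae_eq_Ici (a := t))).symm

lemma meas_F (ν : Measure ℝ) : Measurable fun t => ν (Iic t) :=
  Monotone.measurable fun _ _ hab => measure_mono (Iic_subset_Iic.2 hab)

lemma meas_D (ν : Measure ℝ) : Measurable fun t => ν (Ici t) :=
  Antitone.measurable fun _ _ hab => measure_mono (Ici_subset_Ici.2 hab)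

lemma lemA (ν : Measure ℝ) [IsProbabilityMeasure ν] [NullSingletonClass ν] :
    ∀ (n : ℕ) (c : ℝ), ∫⁻ t in Iic c, (ν (Iic t)) ^ n ∂ν
      = (ν (Iic c)) ^ (n + 1) / (n + 1) := by
  intro n
  induction n with
  | zero => intro c; simp
  | succ n ih =>
    intro c
    have hFm : Measurable fun t => ν (Iic t) := meas_F ν
    have hne0 : ((n : ℝ≥0∞) + 1) ≠ 0 :=
      ne_of_gt (lt_of_lt_of_le zero_lt_one le_add_self)
    have hnetop : ((n : ℝ≥0∞) + 1) ≠ ⊤ :=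
      ENNReal.add_ne_top.2 ⟨ENNReal.natCast_ne_top n, ENNReal.one_ne_top⟩
    have step1 : ∫⁻ t in Iic c, (ν (Iic t)) ^ (n + 1) ∂ν
        = ∫⁻ t in Iic c, ((n : ℝ≥0∞) + 1) * ∫⁻ s in Iic t, (ν (Iic s)) ^ n ∂ν ∂ν := by
      refine setLIntegral_congr_fun measurableSet_Iic (fun t _ => ?_)
      rw [ih t, ENNReal.mul_div_cancel hne0 hnetop]
    have hfm : Measurable fun q : ℝ × ℝ =>
        ({q : ℝ × ℝ | q.1 ≤ c ∧ q.2 ≤ q.1}).indicator (fun q => (ν (Iic q.2)) ^ n) q := by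
      apply Measurable.indicator ((hFm.comp measurable_snd).pow_const n)
      exact ((measurableSet_le measurable_fst measurable_const).inter
        (measurableSet_le measurable_snd measurable_fst))
    have step2 : (∫⁻ t in Iic c, ∫⁻ s in Iic t, (ν (Iic s)) ^ n ∂ν ∂ν)
        = ∫⁻ t, ∫⁻ s,
            ({q : ℝ × ℝ | q.1 ≤ c ∧ q.2 ≤ q.1}).indicator (fun q => (ν (Iic q.2)) ^ n) (t, s)
          ∂ν ∂ν := by
      rw [← lintegral_indicator measurableSet_Iic]
      congr 1 with t
      by_cases ht : t ≤ c
      · rw [indicator_of_mem (mem_Iic.2 ht), ← lintegral_indicator measurableSet_Iic]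
        congr 1 with s
        by_cases hs : s ≤ t <;> simp [indicator_apply, hs, ht]
      · rw [indicator_of_notMem (fun hmem => ht (mem_Iic.1 hmem))]
        have hz : ∀ s : ℝ,
            ({q : ℝ × ℝ | q.1 ≤ c ∧ q.2 ≤ q.1}).indicator
              (fun q => (ν (Iic q.2)) ^ n) (t, s) = 0 := by
          intro s; simp [indicator_apply, ht]
        simp [hz]
    have swap : (∫⁻ t, ∫⁻ s,
            ({q : ℝ × ℝ | q.1 ≤ c ∧ q.2 ≤ q.1}).indicator (fun q => (ν (Iic q.2)) ^ n) (t, s)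
          ∂ν ∂ν)
        = ∫⁻ s, ∫⁻ t,
            ({q : ℝ × ℝ | q.1 ≤ c ∧ q.2 ≤ q.1}).indicator (fun q => (ν (Iic q.2)) ^ n) (t, s)
          ∂ν ∂ν :=
      lintegral_lintegral_swap hfm.aemeasurable
    have step3 : (∫⁻ s, ∫⁻ t,
            ({q : ℝ × ℝ | q.1 ≤ c ∧ q.2 ≤ q.1}).indicator (fun q => (ν (Iic q.2)) ^ n) (t, s)
          ∂ν ∂ν)
        = ∫⁻ s in Iic c, (ν (Iic s)) ^ n * ν (Icc s c) ∂ν := by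
      have inner : ∀ s, (∫⁻ t,
          ({q : ℝ × ℝ | q.1 ≤ c ∧ q.2 ≤ q.1}).indicator (fun q => (ν (Iic q.2)) ^ n) (t, s) ∂ν)
          = (ν (Iic s)) ^ n * ν (Icc s c) := by
        intro s
        have : ∀ t, ({q : ℝ × ℝ | q.1 ≤ c ∧ q.2 ≤ q.1}).indicator
            (fun q => (ν (Iic q.2)) ^ n) (t, s)
            = (Icc s c).indicator (fun _ => (ν (Iic s)) ^ n) t := by
          intro t
          by_cases h1 : t ≤ c <;> by_cases h2 : s ≤ t <;>
            simp [indicator_apply, h1, h2, mem_Icc, and_comm]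
        simp only [this]
        rw [lintegral_indicator measurableSet_Icc]
        simp [mul_comm]
      simp only [inner]
      rw [← lintegral_indicator measurableSet_Iic]
      congr 1 with s
      by_cases hs : s ≤ c
      · simp [indicator_of_mem (mem_Iic.2 hs)]
      · have : ν (Icc s c) = 0 := by
          rw [Icc_eq_empty (fun hle => hs (le_trans hle (le_refl c)))]
          · simp
        simp [this, indicator_apply, hs]
    have hmono : Monotone fun t => ∫⁻ s in Iic t, (ν (Iic s)) ^ n ∂ν :=
      fun a b hab => lintegral_mono' (Measure.restrict_mono (Iic_subset_Iic.2 hab) le_rfl) le_rfl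
    have hAJ : ∫⁻ t in Iic c, (ν (Iic t)) ^ (n + 1) ∂ν
        = ((n : ℝ≥0∞) + 1) * ∫⁻ s in Iic c, (ν (Iic s)) ^ n * ν (Icc s c) ∂ν := by
      rw [step1, lintegral_const_mul _ hmono.measurable, step2, swap, step3]
    have hkey : ∀ s ∈ Iic c, ν (Icc s c) + ν (Iic s) = ν (Iic c) := by
      intro s hs
      have hdisj : Disjoint (Iio s) (Icc s c) := by
        apply Set.disjoint_left.2
        intro x hx hx2
        exact absurd hx2.1 (not_le.2 hx)
      have hunion : Iio s ∪ Icc s c = Iic c := by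
        ext x
        simp only [mem_union, mem_Iio, mem_Icc, mem_Iic]
        constructor
        · rintro (hx | ⟨_, hx⟩)
          · exact le_trans hx.le hs
          · exact hx
        · intro hx
          rcases lt_or_ge x s with h | h
          · exact Or.inl h
          · exact Or.inr ⟨h, hx⟩
      have hu := measure_union (μ := ν) hdisj measurableSet_Icc
      rw [hunion] at hu
      rw [measure_Iic_eq_Iio ν s, hu, add_comm]
    have hIccm : Measurable fun s => ν (Icc s c) := by
      have he : (fun s => ν (Icc s c)) = fun s => ν (Ici s ∩ Iic c) := by
        ext s; rw [Ici_inter_Iic]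
      rw [he]
      exact Antitone.measurable fun a b hab =>
        measure_mono (inter_subset_inter_left _ (Ici_subset_Ici.2 hab))
    have hJA : (∫⁻ s in Iic c, (ν (Iic s)) ^ n * ν (Icc s c) ∂ν)
          + ∫⁻ s in Iic c, (ν (Iic s)) ^ (n + 1) ∂ν
        = ν (Iic c) * ((ν (Iic c)) ^ (n + 1) / ((n : ℝ≥0∞) + 1)) := by
      rw [← lintegral_add_left (f := fun s => ν (Iic s) ^ n * ν (Icc s c)) ((hFm.pow_const n).mul hIccm), ← ih c,
        ← lintegral_const_mul _ (hFm.pow_const n)]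
      refine setLIntegral_congr_fun measurableSet_Iic (fun s hs => ?_)
      rw [pow_succ, ← mul_add, hkey s hs, mul_comm ((ν (Iic s)) ^ n) (ν (Iic c))]
    have hfin : (∫⁻ t in Iic c, (ν (Iic t)) ^ (n + 1) ∂ν) ≠ ⊤ := by
      refine ne_top_of_le_ne_top (b := 1) (by simp) ?_
      calc ∫⁻ t in Iic c, (ν (Iic t)) ^ (n + 1) ∂ν
          ≤ ∫⁻ _ in Iic c, 1 ∂ν := setLIntegral_mono' measurableSet_Iic
              (fun t _ => pow_le_one₀ zero_le prob_le_one)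
        _ ≤ 1 := by simpa using measure_mono (subset_univ (Iic c)) |>.trans prob_le_one
    have hmain : ((n : ℝ≥0∞) + 2) * ∫⁻ t in Iic c, (ν (Iic t)) ^ (n + 1) ∂ν
        = (ν (Iic c)) ^ (n + 2) := by
      have h1 : ((n : ℝ≥0∞) + 1) *
            ((∫⁻ s in Iic c, (ν (Iic s)) ^ n * ν (Icc s c) ∂ν)
              + ∫⁻ s in Iic c, (ν (Iic s)) ^ (n + 1) ∂ν)
          = (∫⁻ t in Iic c, (ν (Iic t)) ^ (n + 1) ∂ν)
              + ((n : ℝ≥0∞) + 1) * ∫⁻ s in Iic c, (ν (Iic s)) ^ (n + 1) ∂ν := by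
        rw [mul_add, ← hAJ]
      rw [hJA] at h1
      have h2 : ((n : ℝ≥0∞) + 1) * (ν (Iic c) * ((ν (Iic c)) ^ (n + 1) / ((n : ℝ≥0∞) + 1)))
          = (ν (Iic c)) ^ (n + 2) := by
        rw [← mul_div_assoc, ← pow_succ', ENNReal.mul_div_cancel hne0 hnetop]
      rw [h2] at h1
      rw [h1]
      ring
    have hne0' : ((n : ℝ≥0∞) + 2) ≠ 0 :=
      ne_of_gt (lt_of_lt_of_le zero_lt_two le_add_self)
    have hnetop' : ((n : ℝ≥0∞) + 2) ≠ ⊤ :=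
      ENNReal.add_ne_top.2 ⟨ENNReal.natCast_ne_top n, by simp⟩
    have := (ENNReal.eq_div_iff hne0' hnetop').2 hmain
    rw [this]
    congr 1
    push_cast
    ring

lemma lemB (ν : Measure ℝ) [IsProbabilityMeasure ν] [NullSingletonClass ν] {c : ℝ}
    (hc : ν (Ici c) ≠ 0) :
    ∫⁻ t in Iic c, (ν (Ici t))⁻¹ ∂ν
      = ENNReal.ofReal (-Real.log (1 - (ν (Iic c)).toReal)) := by
  have hcompl : ∀ t : ℝ, ν (Ici t) = 1 - ν (Iic t) := by
    intro t
    rw [measure_Ici_eq_Ioi, ← compl_Iic, prob_compl_eq_one_sub measurableSet_Iic]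
  -- geometric series expansion of the integrand
  have hgeom : ∀ t : ℝ, (ν (Ici t))⁻¹ = ∑' n : ℕ, (ν (Iic t)) ^ n := by
    intro t
    rw [hcompl t, ENNReal.tsum_geometric]
  have hswap : ∫⁻ t in Iic c, (ν (Ici t))⁻¹ ∂ν
      = ∑' n : ℕ, ∫⁻ t in Iic c, (ν (Iic t)) ^ n ∂ν := by
    simp only [hgeom]
    exact lintegral_tsum fun n => ((meas_F ν).pow_const n).aemeasurable
  rw [hswap]
  simp only [lemA ν]
  -- now convert to real series
  have hne : ν (Iic c) ≠ ⊤ := measure_ne_top ν _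
  have hlt1 : ν (Iic c) < 1 := by
    refine lt_of_le_of_ne prob_le_one fun h1 => hc ?_
    rw [hcompl c, h1, tsub_self]
  set x : ℝ := (ν (Iic c)).toReal with hx
  have hx0 : 0 ≤ x := ENNReal.toReal_nonneg
  have hx1 : x < 1 := by
    have := (ENNReal.toReal_lt_toReal hne ENNReal.one_ne_top).2 hlt1
    simpa using this
  have hsummable : Summable fun n : ℕ => x ^ (n + 1) / ((n : ℝ) + 1) :=
    (Real.hasSum_pow_div_log_of_abs_lt_one (by rwa [abs_of_nonneg hx0])).summable
  have hterm : ∀ n : ℕ, (ν (Iic c)) ^ (n + 1) / ((n : ℝ≥0∞) + 1)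
      = ENNReal.ofReal (x ^ (n + 1) / ((n : ℝ) + 1)) := by
    intro n
    have hofx : ν (Iic c) = ENNReal.ofReal x := (ENNReal.ofReal_toReal hne).symm
    rw [ENNReal.ofReal_div_of_pos (by positivity), hofx, ← ENNReal.ofReal_pow hx0]
    congr 1
    rw [show ((n : ℝ) + 1) = ((n + 1 : ℕ) : ℝ) by push_cast; ring, ENNReal.ofReal_natCast]
    push_cast
    ring
  simp only [hterm]
  rw [← ENNReal.ofReal_tsum_of_nonneg (fun n => by positivity) hsummable]
  congr 1
  exact (Real.hasSum_pow_div_log_of_abs_lt_one (by rwa [abs_of_nonneg hx0])).tsum_eq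

lemma lemC (ν : Measure ℝ) [NullSingletonClass ν] : ν {t : ℝ | ν (Ici t) = 0} = 0 := by
  set S : Set ℝ := {t : ℝ | ν (Ici t) = 0} with hS
  have hup : ∀ s ∈ S, ∀ t : ℝ, s ≤ t → t ∈ S := by
    intro s hs t hst
    exact le_antisymm (hs ▸ measure_mono (Ici_subset_Ici.2 hst)) zero_le
  have hsub : S ⊆ {sInf S} ∪ ⋃ (q : ℚ) (_ : (q : ℝ) ∈ S), Ici (q : ℝ) := by
    intro t ht
    by_cases hex : ∃ s ∈ S, s < t
    · obtain ⟨s, hs, hst⟩ := hex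
      obtain ⟨q, hq1, hq2⟩ := exists_rat_btwn hst
      refine Or.inr ?_
      refine mem_iUnion.2 ⟨q, mem_iUnion.2 ⟨hup s hs q hq1.le, ?_⟩⟩
      exact mem_Ici.2 hq2.le
    · left
      push_neg at hex
      have hlb : ∀ s ∈ S, t ≤ s := hex
      have h1 : sInf S ≤ t := csInf_le ⟨t, hlb⟩ ht
      have h2 : t ≤ sInf S := le_csInf ⟨t, ht⟩ hlb
      exact mem_singleton_iff.2 (le_antisymm h2 h1)
  refine le_antisymm ?_ zero_le
  refine le_trans (measure_mono hsub) ?_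
  refine le_trans (measure_union_le _ _) ?_
  rw [measure_singleton]
  simp only [zero_add]
  refine le_of_eq (measure_iUnion_null fun q => measure_iUnion_null fun hq => hq)

/-- The population AURC, defined as the expectation over thresholds `g x̃` of the
selective risk, equals the reweighted risk `∫ (-log (1 - G x)) · h(x,y) dP`. -/
theorem population_aurc_eq_reweighted_risk {X Y : Type*} [MeasurableSpace X] [MeasurableSpace Y]
    (P : Measure (X × Y)) [IsProbabilityMeasure P]
    (g : X → ℝ) (hg : Measurable g)
    (h : X × Y → ℝ) (hpos : ∀ p, 0 ≤ h p) (hint : Integrable h P)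
    (μ : Measure X) (hμ : μ = P.map Prod.fst) [NullSingletonClass (μ.map g)]
    (G : X → ℝ) (hG : ∀ x, G x = (μ {x' | g x' ≤ g x}).toReal) :
    ∫ xt, (∫ p, h p * (if g xt ≤ g p.1 then (1 : ℝ) else 0) ∂P) /
        (μ {x' | g xt ≤ g x'}).toReal ∂μ
      = ∫ p, (-Real.log (1 - G p.1)) * h p ∂P := by
  classical
  haveI hPμ : IsProbabilityMeasure μ := by
    rw [hμ]; exact Measure.isProbabilityMeasure_map measurable_fst.aemeasurable
  set ν : Measure ℝ := μ.map g with hν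
  haveI : IsProbabilityMeasure ν := Measure.isProbabilityMeasure_map hg.aemeasurable
  -- basic conversions
  have hμIic : ∀ c : ℝ, μ {x' | g x' ≤ c} = ν (Iic c) := fun c => by
    rw [hν, Measure.map_apply hg measurableSet_Iic]; rfl
  have hμIci : ∀ c : ℝ, μ {x' | c ≤ g x'} = ν (Ici c) := fun c => by
    rw [hν, Measure.map_apply hg measurableSet_Ici]; rfl
  have hmapP : P.map (fun p : X × Y => g p.1) = ν := by
    rw [hν, hμ]
    exact (Measure.map_map hg measurable_fst).symm
  have hPIci : ∀ c : ℝ, P {p : X × Y | c ≤ g p.1} = ν (Ici c) := fun c => by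
    rw [show {p : X × Y | c ≤ g p.1} = (fun p : X × Y => g p.1) ⁻¹' (Ici c) from rfl,
      ← Measure.map_apply (show Measurable fun p : X × Y => g p.1 from hg.comp measurable_fst) measurableSet_Ici, hmapP]
  -- measurable version of ofReal ∘ h
  have hH₀ : AEMeasurable (fun p => ENNReal.ofReal (h p)) P :=
    ENNReal.measurable_ofReal.comp_aemeasurable hint.1.aemeasurable
  set H : X × Y → ℝ≥0∞ := hH₀.mk _ with hHdef
  have hHm : Measurable H := hH₀.measurable_mk
  have hHae : (fun p => ENNReal.ofReal (h p)) =ᵐ[P] H := hH₀.ae_eq_mk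
  have hHfin : ∫⁻ p, H p ∂P ≠ ⊤ := by
    rw [← lintegral_congr_ae hHae]
    have he : ∫⁻ p, ENNReal.ofReal (h p) ∂P = ∫⁻ p, ‖h p‖ₑ ∂P :=
      lintegral_congr fun p => (Real.enorm_eq_ofReal (hpos p)).symm
    rw [he]
    exact hint.2.ne
  -- weight function
  set W : X × Y → ℝ≥0∞ :=
    fun p => ENNReal.ofReal (-Real.log (1 - (ν (Iic (g p.1))).toReal)) with hWdef
  -- properties of the real weight
  have htR1 : ∀ c : ℝ, (ν (Iic c)).toReal ≤ 1 := fun c => by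
    have := ENNReal.toReal_mono (ENNReal.one_ne_top) (prob_le_one (μ := ν) (s := Iic c))
    simpa using this
  have hwnn : ∀ p : X × Y, 0 ≤ -Real.log (1 - (ν (Iic (g p.1))).toReal) := fun p => by
    have h0 : (0:ℝ) ≤ (ν (Iic (g p.1))).toReal := ENNReal.toReal_nonneg
    have h1 := htR1 (g p.1)
    exact neg_nonneg.2 (Real.log_nonpos (by linarith) (by linarith))
  have hwm : Measurable fun p : X × Y => -Real.log (1 - (ν (Iic (g p.1))).toReal) := by
    apply Measurable.neg
    apply Real.measurable_log.comp
    exact measurable_const.sub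
      (ENNReal.measurable_toReal.comp ((meas_F ν).comp (hg.comp measurable_fst)))
  -- the indicator kernel
  have hTset : MeasurableSet {q : X × (X × Y) | g q.1 ≤ g q.2.1} :=
    measurableSet_le (hg.comp measurable_fst) (hg.comp (measurable_fst.comp measurable_snd))
  have hTindm : Measurable
      (({q : X × (X × Y) | g q.1 ≤ g q.2.1}).indicator (fun q => H q.2)) :=
    (hHm.comp measurable_snd).indicator hTset
  have hDm : Measurable fun xt : X => ν (Ici (g xt)) := (meas_D ν).comp hg
  -- ==================== RHS ====================
  have hRHS : ∫ p, (-Real.log (1 - G p.1)) * h p ∂P = (∫⁻ p, H p * W p ∂P).toReal := by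
    have hfun : (fun p : X × Y => (-Real.log (1 - G p.1)) * h p)
        = fun p => (-Real.log (1 - (ν (Iic (g p.1))).toReal)) * h p :=
      funext fun p => by rw [hG, hμIic]
    rw [hfun, integral_eq_lintegral_of_nonneg_ae
      (ae_of_all _ fun p => mul_nonneg (hwnn p) (hpos p))
      (hwm.aestronglyMeasurable.mul hint.1)]
    congr 1
    have h1 : ∀ p : X × Y,
        ENNReal.ofReal ((-Real.log (1 - (ν (Iic (g p.1))).toReal)) * h p)
          = W p * ENNReal.ofReal (h p) := fun p => by
      rw [ENNReal.ofReal_mul (hwnn p)]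
    rw [lintegral_congr h1]
    refine lintegral_congr_ae ?_
    filter_upwards [hHae] with p hp
    rw [hp, mul_comm]
  -- ==================== LHS ====================
  -- inner Bochner integral
  have hinner : ∀ xt : X, ∫ p, h p * (if g xt ≤ g p.1 then (1 : ℝ) else 0) ∂P
      = (∫⁻ p, ({q : X × (X × Y) | g q.1 ≤ g q.2.1}).indicator
          (fun q => H q.2) (xt, p) ∂P).toReal := by
    intro xt
    have hsm : MeasurableSet {p : X × Y | g xt ≤ g p.1} :=
      measurableSet_le measurable_const (hg.comp measurable_fst)
    have hitem : Measurable fun p : X × Y => if g xt ≤ g p.1 then (1:ℝ) else 0 :=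
      Measurable.ite hsm measurable_const measurable_const
    rw [integral_eq_lintegral_of_nonneg_ae
      (ae_of_all _ fun p => mul_nonneg (hpos p) (by split <;> norm_num))
      (hint.1.mul hitem.aestronglyMeasurable)]
    congr 1
    refine lintegral_congr_ae ?_
    filter_upwards [hHae] with p hp
    by_cases hle : g xt ≤ g p.1
    · have hmem : (xt, p) ∈ {q : X × (X × Y) | g q.1 ≤ g q.2.1} := hle
      rw [indicator_of_mem hmem, if_pos hle, mul_one, hp]
    · have hmem : (xt, p) ∉ {q : X × (X × Y) | g q.1 ≤ g q.2.1} := hle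
      rw [indicator_of_notMem hmem, if_neg hle, mul_zero, ENNReal.ofReal_zero]
  -- rewrite the outer integrand
  have hfun2 : (fun xt => (∫ p, h p * (if g xt ≤ g p.1 then (1 : ℝ) else 0) ∂P) /
        (μ {x' | g xt ≤ g x'}).toReal)
      = fun xt => ((∫⁻ p, ({q : X × (X × Y) | g q.1 ≤ g q.2.1}).indicator
          (fun q => H q.2) (xt, p) ∂P) / ν (Ici (g xt))).toReal := by
    funext xt
    rw [hinner xt, hμIci (g xt), ENNReal.toReal_div]
  -- everywhere-finiteness of the quotient
  have hNle : ∀ xt : X, (∫⁻ p, ({q : X × (X × Y) | g q.1 ≤ g q.2.1}).indicator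
      (fun q => H q.2) (xt, p) ∂P) ≤ ∫⁻ p, H p ∂P := fun xt =>
    lintegral_mono fun p => indicator_le_self _ _ (xt, p)
  have hfinite : ∀ xt : X, (∫⁻ p, ({q : X × (X × Y) | g q.1 ≤ g q.2.1}).indicator
      (fun q => H q.2) (xt, p) ∂P) / ν (Ici (g xt)) < ⊤ := by
    intro xt
    by_cases hD0 : ν (Ici (g xt)) = 0
    · have hP0 : P {p : X × Y | g xt ≤ g p.1} = 0 := by rw [hPIci]; exact hD0
      have hsm : MeasurableSet {p : X × Y | g xt ≤ g p.1} :=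
        measurableSet_le measurable_const (hg.comp measurable_fst)
      have hN0 : (∫⁻ p, ({q : X × (X × Y) | g q.1 ≤ g q.2.1}).indicator
          (fun q => H q.2) (xt, p) ∂P) = 0 := by
        have heq : ∀ p : X × Y, ({q : X × (X × Y) | g q.1 ≤ g q.2.1}).indicator
            (fun q => H q.2) (xt, p) = ({p : X × Y | g xt ≤ g p.1}).indicator H p := by
          intro p
          by_cases hle : g xt ≤ g p.1 <;> simp [indicator_apply, hle]
        rw [lintegral_congr heq, lintegral_indicator hsm,
          setLIntegral_measure_zero _ _ hP0]
      rw [hN0, ENNReal.zero_div]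
      exact ENNReal.zero_lt_top
    · exact ENNReal.div_lt_top (ne_top_of_le_ne_top hHfin (hNle xt)) hD0
  have hNm : Measurable fun xt : X => ∫⁻ p, ({q : X × (X × Y) | g q.1 ≤ g q.2.1}).indicator
      (fun q => H q.2) (xt, p) ∂P := Measurable.lintegral_prod_right' hTindm
  rw [hfun2, integral_toReal (by exact (hNm.div hDm).aemeasurable) (ae_of_all _ hfinite), hRHS]
  congr 1
  -- now an equality of lintegrals
  have hstep4 : ∀ xt : X, (∫⁻ p, ({q : X × (X × Y) | g q.1 ≤ g q.2.1}).indicator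
        (fun q => H q.2) (xt, p) ∂P) / ν (Ici (g xt))
      = ∫⁻ p, ({q : X × (X × Y) | g q.1 ≤ g q.2.1}).indicator
          (fun q => H q.2) (xt, p) * (ν (Ici (g xt)))⁻¹ ∂P := fun xt => by
    rw [lintegral_mul_const _ (show Measurable fun p : X × Y =>
      ({q : X × (X × Y) | g q.1 ≤ g q.2.1}).indicator (fun q => H q.2) (xt, p)
      from hTindm.comp measurable_prodMk_left), div_eq_mul_inv]
  have hswap : ∫⁻ xt, ∫⁻ p, ({q : X × (X × Y) | g q.1 ≤ g q.2.1}).indicator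
        (fun q => H q.2) (xt, p) * (ν (Ici (g xt)))⁻¹ ∂P ∂μ
      = ∫⁻ p, ∫⁻ xt, ({q : X × (X × Y) | g q.1 ≤ g q.2.1}).indicator
          (fun q => H q.2) (xt, p) * (ν (Ici (g xt)))⁻¹ ∂μ ∂P :=
    lintegral_lintegral_swap
      ((hTindm.mul ((hDm.comp measurable_fst).inv)).aemeasurable)
  rw [lintegral_congr hstep4, hswap]
  -- a.e. nonvanishing of the denominator
  have hSm : MeasurableSet {t : ℝ | ν (Ici t) = 0} :=
    meas_D ν (measurableSet_singleton 0)
  have hae : ∀ᵐ p ∂P, ν (Ici (g p.1)) ≠ 0 := by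
    rw [ae_iff]
    have hset : {p : X × Y | ¬ ν (Ici (g p.1)) ≠ 0}
        = (fun p : X × Y => g p.1) ⁻¹' {t : ℝ | ν (Ici t) = 0} := by
      ext p; simp [not_not]
    rw [hset, ← Measure.map_apply (show Measurable fun p : X × Y => g p.1 from hg.comp measurable_fst) hSm, hmapP]
    exact lemC ν
  refine lintegral_congr_ae ?_
  filter_upwards [hae] with p hp
  have hk : Measurable ((Iic (g p.1)).indicator fun t : ℝ => (ν (Ici t))⁻¹) :=
    ((meas_D ν).inv).indicator measurableSet_Iic
  have hptwise : ∀ xt : X, ({q : X × (X × Y) | g q.1 ≤ g q.2.1}).indicator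
        (fun q => H q.2) (xt, p) * (ν (Ici (g xt)))⁻¹
      = H p * (Iic (g p.1)).indicator (fun t : ℝ => (ν (Ici t))⁻¹) (g xt) := by
    intro xt
    by_cases hle : g xt ≤ g p.1
    · rw [indicator_of_mem (hle : (xt, p) ∈ _), indicator_of_mem (mem_Iic.2 hle)]
    · rw [indicator_of_notMem (hle : (xt, p) ∉ _),
        indicator_of_notMem (fun hmem => hle (mem_Iic.1 hmem)), zero_mul, mul_zero]
  rw [lintegral_congr hptwise,
    lintegral_const_mul _ (show Measurable fun xt : X =>
      (Iic (g p.1)).indicator (fun t : ℝ => (ν (Ici t))⁻¹) (g xt) from hk.comp hg)]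
  congr 1
  have hchange : (∫⁻ xt, (Iic (g p.1)).indicator (fun t : ℝ => (ν (Ici t))⁻¹) (g xt) ∂μ)
      = ∫⁻ t, (Iic (g p.1)).indicator (fun t : ℝ => (ν (Ici t))⁻¹) t ∂ν := by
    rw [hν]
    exact (lintegral_map hk hg).symm
  rw [hchange, lintegral_indicator measurableSet_Iic]
  exact lemB ν hp
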